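/- Let μ ≤_c ν be discrete probability measures with smallest μ-atom x₁ of mass ω₁, with y_ℓ < x₁ < y_{ℓ+1} consecutive ν-atoms, and let ϑ'_ℓ, ϑ'_{ℓ+1} solve ϑ'_ℓ + ϑ'_{ℓ+1} = ω₁, ϑ'_ℓ y_ℓ + ϑ'_{ℓ+1} y_{ℓ+1} = ω₁ x₁. If ϑ'_ℓ ≤ ν({y_ℓ}) and ϑ'_{ℓ+1} ≤ ν({y_{ℓ+1}}), then the residual measures μ̃ = μ − ω₁δ_{x₁} and ν̃ = ν − ϑ'_ℓ δ_{y_ℓ} − ϑ'_{ℓ+1} δ_{y_{ℓ+1}} satisfy μ̃ ≤_c ν̃. -/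

import Mathlib

open Finset

/-- Three-point convexity inequality. -/
lemma three_point' {f : ℝ → ℝ} (hf : ConvexOn ℝ Set.univ f) {p t q : ℝ}
    (hpt : p ≤ t) (htq : t ≤ q) (hpq : p < q) :
    (q - p) * f t ≤ (q - t) * f p + (t - p) * f q := by
  have hd : (0:ℝ) < q - p := by linarith
  have ha : (0:ℝ) ≤ (q - t) / (q - p) := div_nonneg (by linarith) hd.le
  have hb : (0:ℝ) ≤ (t - p) / (q - p) := div_nonneg (by linarith) hd.le
  have hab : (q - t) / (q - p) + (t - p) / (q - p) = 1 := by
    field_simp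
    ring
  have h := hf.2 (Set.mem_univ p) (Set.mem_univ q) ha hb hab
  simp only [smul_eq_mul] at h
  have ht : (q - t) / (q - p) * p + (t - p) / (q - p) * q = t := by
    field_simp; ring
  rw [ht] at h
  have := mul_le_mul_of_nonneg_left h hd.le
  calc (q - p) * f t ≤ (q - p) * ((q - t) / (q - p) * f p + (t - p) / (q - p) * f q) := this
    _ = (q - t) * f p + (t - p) * f q := by field_simp

theorem stmt15 (N M : ℕ) (x : Fin (N + 1) → ℝ) (y : Fin M → ℝ)
    (ω : Fin (N + 1) → ℝ) (ϑ : Fin M → ℝ)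
    (hx : StrictMono x) (hy : StrictMono y)
    (hω : ∀ j, 0 < ω j) (hϑ : ∀ i, 0 < ϑ i)
    (hω1 : ∑ j, ω j = 1) (hϑ1 : ∑ i, ϑ i = 1)
    (hcx : ∀ f : ℝ → ℝ, ConvexOn ℝ Set.univ f →
        ∑ j, ω j * f (x j) ≤ ∑ i, ϑ i * f (y i))
    (ℓ : ℕ) (h1 : ℓ < M) (h2 : ℓ + 1 < M)
    (hlow : y ⟨ℓ, h1⟩ < x 0) (hhigh : x 0 < y ⟨ℓ + 1, h2⟩)
    (ϑl ϑr : ℝ)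
    (heq1 : ϑl + ϑr = ω 0)
    (heq2 : ϑl * y ⟨ℓ, h1⟩ + ϑr * y ⟨ℓ + 1, h2⟩ = ω 0 * x 0)
    (hle1 : ϑl ≤ ϑ ⟨ℓ, h1⟩) (hle2 : ϑr ≤ ϑ ⟨ℓ + 1, h2⟩) :
    ∀ f : ℝ → ℝ, ConvexOn ℝ Set.univ f →
      ∑ j ∈ Finset.univ.erase 0, ω j * f (x j) ≤
        (∑ i, ϑ i * f (y i)) - ϑl * f (y ⟨ℓ, h1⟩) - ϑr * f (y ⟨ℓ + 1, h2⟩) := by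
  intro f hf
  set yl := y ⟨ℓ, h1⟩ with hyl
  set yr := y ⟨ℓ + 1, h2⟩ with hyr
  have hlr : yl < yr := hy (by simp [Fin.lt_def])
  have hd : (0:ℝ) < yr - yl := by linarith
  have hd' : yr - yl ≠ 0 := ne_of_gt hd
  -- the chord of f over [yl, yr]
  set L : ℝ → ℝ := fun t => ((yr - t) * f yl + (t - yl) * f yr) / (yr - yl) with hL
  have hLconv : ConvexOn ℝ Set.univ L := by
    refine ⟨convex_univ, ?_⟩
    intro p _ q _ a b ha hb hab
    have hb' : b = 1 - a := by linarith
    subst hb'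
    simp only [hL, smul_eq_mul]
    apply le_of_eq
    field_simp
    ring
  -- f ≤ L on [yl, yr]
  have hfle : ∀ t, yl ≤ t → t ≤ yr → f t ≤ L t := by
    intro t h1 h2
    rw [hL, le_div_iff₀ hd]
    have := three_point' hf h1 h2 hlr
    linarith
  -- L ≤ f outside (yl, yr)
  have hLle_left : ∀ t, t ≤ yl → L t ≤ f t := by
    intro t ht
    rw [hL, div_le_iff₀ hd]
    have := three_point' hf ht hlr.le (lt_of_le_of_lt ht hlr)
    linarith
  have hLle_right : ∀ t, yr ≤ t → L t ≤ f t := by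
    intro t ht
    rw [hL, div_le_iff₀ hd]
    have := three_point' hf hlr.le ht (lt_of_lt_of_le hlr ht)
    linarith
  set g : ℝ → ℝ := fun t => max (f t) (L t) with hg
  have hgconv : ConvexOn ℝ Set.univ g := by
    have := hf.sup hLconv
    have hgf : g = f ⊔ L := by
      funext t
      simp [hg, Pi.sup_apply]
    rw [hgf]
    exact this
  have key := hcx g hgconv
  -- g = f at each y i
  have hgy : ∀ i : Fin M, g (y i) = f (y i) := by
    intro i
    rcases le_or_gt i.1 ℓ with h | h
    · exact max_eq_left (hLle_left _ (hy.monotone (by simp [Fin.le_def, h])))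
    · exact max_eq_left (hLle_right _ (hy.monotone (by simp [Fin.le_def]; omega)))
  have hsumy : ∑ i, ϑ i * g (y i) = ∑ i, ϑ i * f (y i) := by
    exact Finset.sum_congr rfl fun i _ => by rw [hgy i]
  -- g (x 0) = L (x 0)
  have hgx0 : g (x 0) = L (x 0) := max_eq_right (hfle _ hlow.le hhigh.le)
  -- split off j = 0
  have hsplit : ∑ j ∈ Finset.univ.erase 0, ω j * g (x j) + ω 0 * g (x 0)
      = ∑ j, ω j * g (x j) := Finset.sum_erase_add _ _ (Finset.mem_univ 0)
  have hstep1 : ∑ j ∈ Finset.univ.erase 0, ω j * f (x j)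
      ≤ ∑ j ∈ Finset.univ.erase 0, ω j * g (x j) :=
    Finset.sum_le_sum fun j _ => mul_le_mul_of_nonneg_left (le_max_left _ _) (hω j).le
  -- the martingale identity
  have hmart : ω 0 * L (x 0) = ϑl * f yl + ϑr * f yr := by
    have hLx : L (x 0) = ((yr - x 0) * f yl + (x 0 - yl) * f yr) / (yr - yl) := rfl
    rw [hLx, ← mul_div_assoc, div_eq_iff hd']
    linear_combination (f yl - f yr) * heq2 - (yr * f yl - yl * f yr) * heq1
  rw [hgx0] at hsplit
  rw [hsumy] at key
  linarith
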